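/- Edge restriction of the elemental nonconforming bubble: let p be an even positive integer, let V₁, V₂, V₃ be affinely independent points of ℝ² with barycentric coordinates λ₁, λ₂, λ₃, and define b(x) := (1/2)(−1 + L_p(1−2λ₁(x)) + L_p(1−2λ₂(x)) + L_p(1−2λ₃(x))). Then for every pair of distinct indices i, j and all t ∈ [0,1], b(V_i + t(V_j − V_i)) = L_p(2t − 1). In particular, the restriction of b to any edge of the triangle depends only on that edge (parametrized from one endpoint to the other) and not on the third vertex. -/
import Mathlib


open MeasureTheory Polynomial

lemma eval_one_iter_aux (k : ℕ) : ∀ q : Polynomial ℝ,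
    ((fun r : Polynomial ℝ => derivative r)^[k] ((X - 1)^k * q)).eval 1
      = k.factorial * q.eval 1 := by
  induction k with
  | zero => intro q; simp
  | succ k ih =>
    intro q
    rw [Function.iterate_succ_apply]
    have h : derivative ((X - 1 : Polynomial ℝ)^(k+1) * q)
        = (X - 1)^k * (C ((k:ℝ)+1) * q + (X - 1) * derivative q) := by
      rw [derivative_mul, derivative_pow]
      push_cast
      ring_nf
      simp
    rw [h, ih]
    simp [Nat.factorial_succ]
    ring

lemma comp_neg_iter_aux (n : ℕ) (P : Polynomial ℝ) :
    ((fun r : Polynomial ℝ => derivative r)^[n] P).comp (-X)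
      = (-1:Polynomial ℝ)^n * (fun r : Polynomial ℝ => derivative r)^[n] (P.comp (-X)) := by
  induction n generalizing P with
  | zero => simp
  | succ n ih =>
    rw [Function.iterate_succ_apply', Function.iterate_succ_apply']
    have h : ∀ Q : Polynomial ℝ, (derivative Q).comp (-X) = - derivative (Q.comp (-X)) := by
      intro Q
      have := derivative_comp Q (-X)
      simp at this
      rw [this]; ring
    have hd : derivative ((-1:ℝ[X])^n) = 0 := by
      simp [derivative_pow]
    rw [h, ih, derivative_mul, hd]
    simp
    ring

/-- The Legendre polynomial of degree `k`, via Rodrigues' formula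
`L_k(x) = (1/(2^k k!)) (d/dx)^k [(x² − 1)^k]`. -/
noncomputable def legendre (k : ℕ) : Polynomial ℝ :=
  ((2 ^ k * k.factorial : ℝ)⁻¹) •
    ((fun q : Polynomial ℝ => Polynomial.derivative q)^[k] ((Polynomial.X ^ 2 - 1) ^ k))

lemma legendre_eval_one (p : ℕ) : (legendre p).eval 1 = 1 := by
  have hfac : (((X:ℝ[X]) ^ 2 - 1) ^ p) = (X - 1)^p * ((X + 1)^p) := by
    rw [← mul_pow]; ring_nf
  rw [legendre, eval_smul, hfac, eval_one_iter_aux]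
  simp [smul_eq_mul]
  rw [show ((1:ℝ)+1) = 2 by norm_num]
  have h1 : (p.factorial : ℝ) ≠ 0 := Nat.cast_ne_zero.mpr p.factorial_ne_zero
  have h2 : (2:ℝ)^p ≠ 0 := by positivity
  field_simp

lemma legendre_eval_neg (p : ℕ) (hp : Even p) (x : ℝ) :
    (legendre p).eval (-x) = (legendre p).eval x := by
  have hP : (((X:ℝ[X]) ^ 2 - 1) ^ p).comp (-X) = ((X:ℝ[X]) ^ 2 - 1) ^ p := by
    simp [pow_comp, sub_comp, neg_sq]
  have h := comp_neg_iter_aux p (((X:ℝ[X]) ^ 2 - 1) ^ p)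
  rw [hP, hp.neg_one_pow, one_mul] at h
  rw [legendre, eval_smul, eval_smul, smul_eq_mul, smul_eq_mul]
  congr 1
  have h2 : eval (-x) ((fun q : Polynomial ℝ => derivative q)^[p] (((X:ℝ[X]) ^ 2 - 1) ^ p))
      = eval x ((((fun q : Polynomial ℝ => derivative q)^[p] (((X:ℝ[X]) ^ 2 - 1) ^ p)).comp (-X))) := by
    simp [eval_comp]
  rw [h2, h]

/-- Edge restriction of the elemental nonconforming bubble: for even `p`, the bubble
`b = (1/2)(−1 + Σᵢ L_p(1−2λᵢ))` restricts on each oriented edge to `L_p(2t−1)`. -/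
theorem elemental_bubble_edge_restriction (p : ℕ) (hp_pos : 0 < p) (hp_even : Even p)
    (V : Fin 3 → (Fin 2 → ℝ)) (hV : AffineIndependent ℝ V)
    (lam : Fin 3 → ((Fin 2 → ℝ) →ᵃ[ℝ] ℝ))
    (hlam : ∀ i j : Fin 3, lam i (V j) = if i = j then 1 else 0)
    (b : (Fin 2 → ℝ) → ℝ)
    (hb : ∀ x : Fin 2 → ℝ, b x = (1 / 2 : ℝ) *
      (-1 + (legendre p).eval (1 - 2 * lam 0 x) + (legendre p).eval (1 - 2 * lam 1 x) +
        (legendre p).eval (1 - 2 * lam 2 x))) :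
    ∀ i j : Fin 3, i ≠ j → ∀ t ∈ Set.Icc (0:ℝ) 1,
      b (V i + t • (V j - V i)) = (legendre p).eval (2 * t - 1) := by
  intro i j hij t ht
  have key : ∀ m i j : Fin 3, lam m (V i + t • (V j - V i))
      = lam m (V i) + t * (lam m (V j) - lam m (V i)) := by
    intro m i j
    have h1 : V i + t • (V j - V i) = t • (V j - V i) +ᵥ V i := by
      simp [vadd_eq_add]; abel
    rw [h1, (lam m).map_vadd]
    have h2 : (lam m).linear (V j - V i) = lam m (V j) - lam m (V i) := by
      have := (lam m).linearMap_vsub (V j) (V i)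
      simpa [vsub_eq_sub] using this
    rw [(lam m).linear.map_smul, h2]
    simp [vadd_eq_add, smul_eq_mul]
    ring
  have E1 : (legendre p).eval (1 - 2*(1-t)) = (legendre p).eval (2*t-1) := by
    rw [show (1:ℝ)-2*(1-t) = 2*t-1 by ring]
  have E2 : (legendre p).eval (1 - 2*t) = (legendre p).eval (2*t-1) := by
    rw [show (1:ℝ)-2*t = -(2*t-1) by ring, legendre_eval_neg p hp_even]
  have E3 : (legendre p).eval (1 - 2*(0:ℝ)) = 1 := by
    rw [show (1:ℝ)-2*0 = 1 by ring, legendre_eval_one]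
  have hval : ∀ m i j : Fin 3, i ≠ j → lam m (V i + t • (V j - V i))
      = if m = i then 1 - t else if m = j then t else 0 := by
    intro m i j hij'
    rw [key, hlam, hlam]
    by_cases hmi : m = i
    · subst hmi
      simp [hij']
      ring
    · by_cases hmj : m = j
      · subst hmj
        simp [hmi]
      · simp [hmi, hmj]
  have hcase : (i = 0 ∧ j = 1) ∨ (i = 0 ∧ j = 2) ∨ (i = 1 ∧ j = 0) ∨ (i = 1 ∧ j = 2)
      ∨ (i = 2 ∧ j = 0) ∨ (i = 2 ∧ j = 1) := by
    fin_cases i <;> fin_cases j <;> simp_all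
  rcases hcase with ⟨rfl, rfl⟩ | ⟨rfl, rfl⟩ | ⟨rfl, rfl⟩ | ⟨rfl, rfl⟩ | ⟨rfl, rfl⟩ | ⟨rfl, rfl⟩ <;>
      rw [hb, hval 0 _ _ hij, hval 1 _ _ hij, hval 2 _ _ hij] <;>
      simp only [Fin.isValue, Fin.reduceEq, reduceIte, if_true, if_false] <;>
      rw [E1, E2, E3] <;>
      ring
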